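/- arXiv:2304.11927 — 2 statements merged into one kernel-verified Lean document; each statement's English description precedes it below -/
import Mathlib

section
/- Let G = (R ∪ B, E) be a bipartite graph with R ≠ ∅ in which every r ∈ R has degree exactly d ≥ 1, and let κ be an integer with 0 ≤ κ ≤ |B|. Construct the election with candidates C = C(R) ∪ C(B) ∪ {p} ∪ X, where C(S) = {c(u) : u ∈ S}, p is fresh, and X is a set of d fresh candidates; votes V: one vote {p} ∪ X; |R| copies of the vote {p}; for each r ∈ R, |R| copies of the vote {c(r)}; and for each r ∈ R, one vote v(r) = {c(r)} ∪ C(N_G(r)); committee size k = |R|. Then there exists B' ⊆ B with |B'| ≤ κ dominating R if and only if there exists C' ⊆ C ∖ {p} with |C'| ≤ κ such that p is not contained in any SAV winning k-committee of (C ∖ C', V_{C∖C'}). -/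
open Finset

attribute [local instance] Classical.propDecidable

universe u

variable {α : Type u}

/-- The Thiele ω-score of a committee `w` in the election with votes `V`. -/
noncomputable def thieleScore [DecidableEq α] (ω : ℕ → ℝ) (V : Multiset (Finset α))
    (w : Finset α) : ℝ :=
  (V.map fun v => ω (v ∩ w).card).sum

/-- The ω margin contribution of candidate `c` to committee `w`. -/
noncomputable def marginContrib [DecidableEq α] (ω : ℕ → ℝ) (V : Multiset (Finset α))
    (w : Finset α) (c : α) : ℝ :=
  thieleScore ω V (insert c w) - thieleScore ω V w

/-- Candidates of `C \ w` whose ω margin contribution to `w` is maximum. -/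
noncomputable def maxMarginSet [DecidableEq α] (ω : ℕ → ℝ) (V : Multiset (Finset α))
    (C w : Finset α) : Finset α :=
  (C \ w).filter fun c => ∀ c' ∈ C \ w, marginContrib ω V w c' ≤ marginContrib ω V w c

/-- Among the maximizers, the candidate(s) earliest in the tie-breaking order `pri`
(the order with `a ⊳ b` iff `pri a < pri b`). -/
noncomputable def seqNext [DecidableEq α] (ω : ℕ → ℝ) (pri : α → ℕ) (V : Multiset (Finset α))
    (C w : Finset α) : Finset α :=
  (maxMarginSet ω V C w).filter fun c => ∀ c' ∈ maxMarginSet ω V C w, pri c ≤ pri c'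

/-- The winning `k`-committee of the sequential ω-Thiele rule with tie-breaking order `pri`:
starting from `∅`, repeatedly add the candidate with maximum ω margin contribution,
breaking ties in favor of the candidate earliest in the order. -/
noncomputable def seqCommittee [DecidableEq α] (ω : ℕ → ℝ) (pri : α → ℕ)
    (V : Multiset (Finset α)) (C : Finset α) : ℕ → Finset α
  | 0 => ∅
  | k + 1 => seqCommittee ω pri V C k ∪ seqNext ω pri V C (seqCommittee ω pri V C k)

/-- The AV score of a committee. -/
noncomputable def avScore [DecidableEq α] (V : Multiset (Finset α)) (w : Finset α) : ℕ :=
  (V.map fun v => (v ∩ w).card).sum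

/-- AV winning `k`-committees: the `k`-subsets of `C` of maximum AV score. -/
noncomputable def avWinners [DecidableEq α] (C : Finset α) (V : Multiset (Finset α)) (k : ℕ) :
    Finset (Finset α) :=
  (C.powersetCard k).filter fun w => ∀ w' ∈ C.powersetCard k, avScore V w' ≤ avScore V w

/-- The SAV score of a committee. -/
noncomputable def savScore [DecidableEq α] (V : Multiset (Finset α)) (w : Finset α) : ℝ :=
  (V.map fun v => ((w ∩ v).card : ℝ) / (v.card : ℝ)).sum

/-- SAV winning `k`-committees: the `k`-subsets of `C` of maximum SAV score. -/
noncomputable def savWinners [DecidableEq α] (C : Finset α) (V : Multiset (Finset α)) (k : ℕ) :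
    Finset (Finset α) :=
  (C.powersetCard k).filter fun w => ∀ w' ∈ C.powersetCard k, savScore V w' ≤ savScore V w

/-- The NSAV score of a committee (with respect to candidate set `C`). -/
noncomputable def nsavScore [DecidableEq α] (C : Finset α) (V : Multiset (Finset α))
    (w : Finset α) : ℝ :=
  (V.map fun v => ((w ∩ v).card : ℝ) / (v.card : ℝ)).sum
    - (V.map fun v => ((w \ v).card : ℝ) / ((C \ v).card : ℝ)).sum

/-- The PAV score of a committee. -/
noncomputable def pavScore [DecidableEq α] (V : Multiset (Finset α)) (w : Finset α) : ℝ :=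
  (V.map fun v => ∑ i ∈ Finset.range (v ∩ w).card, (1 : ℝ) / (i + 1)).sum

/-- PAV winning `k`-committees: the `k`-subsets of `C` of maximum PAV score. -/
noncomputable def pavWinners [DecidableEq α] (C : Finset α) (V : Multiset (Finset α)) (k : ℕ) :
    Finset (Finset α) :=
  (C.powersetCard k).filter fun w => ∀ w' ∈ C.powersetCard k, pavScore V w' ≤ pavScore V w

/-- The ABCCV score of a committee: the number of votes approving at least one member. -/
noncomputable def abccvScore [DecidableEq α] (V : Multiset (Finset α)) (w : Finset α) : ℕ :=
  Multiset.card (V.filter fun v => (v ∩ w).Nonempty)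

/-- ABCCV winning `k`-committees: the `k`-subsets of `C` of maximum ABCCV score. -/
noncomputable def abccvWinners [DecidableEq α] (C : Finset α) (V : Multiset (Finset α)) (k : ℕ) :
    Finset (Finset α) :=
  (C.powersetCard k).filter fun w => ∀ w' ∈ C.powersetCard k, abccvScore V w' ≤ abccvScore V w

/-- The MAV score of a committee: the maximum Hamming distance to a vote. -/
noncomputable def mavScore [DecidableEq α] (V : Multiset (Finset α)) (w : Finset α) : ℕ :=
  (V.map fun v => (w \ v).card + (v \ w).card).sup

/-- MAV winning `k`-committees: the `k`-subsets of `C` of minimum MAV score. -/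
noncomputable def mavWinners [DecidableEq α] (C : Finset α) (V : Multiset (Finset α)) (k : ℕ) :
    Finset (Finset α) :=
  (C.powersetCard k).filter fun w => ∀ w' ∈ C.powersetCard k, mavScore V w ≤ mavScore V w'


section AuxGeneral
variable {α : Type u}

/-- The contribution of a single candidate to the SAV score. -/
noncomputable def indivScore [DecidableEq α] (V : Multiset (Finset α)) (c : α) : ℝ :=
  (V.map fun v => (if c ∈ v then (1:ℝ) else 0) / (v.card : ℝ)).sum

lemma sum_map_finset_sum {γ : Type u} (V : Multiset γ) (w : Finset α) (g : α → γ → ℝ) :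
    (V.map fun v => ∑ c ∈ w, g c v).sum = ∑ c ∈ w, (V.map fun v => g c v).sum := by
  induction V using Multiset.induction with
  | empty => simp
  | cons a s ih => simp [ih, Finset.sum_add_distrib]

lemma savScore_eq_sum_indiv [DecidableEq α] (V : Multiset (Finset α)) (w : Finset α) :
    savScore V w = ∑ c ∈ w, indivScore V c := by
  simp only [savScore, indivScore]
  rw [← sum_map_finset_sum]
  congr 1
  apply Multiset.map_congr rfl
  intro v _
  rw [← Finset.sum_div]
  congr 1
  rw [Finset.sum_boole, ← Finset.filter_mem_eq_inter]

lemma savScore_swap [DecidableEq α] (V : Multiset (Finset α)) (w : Finset α) (c c' : α)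
    (hc : c ∈ w) (hc' : c' ∉ w) :
    savScore V (insert c' (w.erase c)) = savScore V w - indivScore V c + indivScore V c' := by
  rw [savScore_eq_sum_indiv, savScore_eq_sum_indiv,
    Finset.sum_insert (fun h => hc' (Finset.mem_of_mem_erase h)),
    Finset.sum_erase_eq_sub hc]
  ring

lemma savWinners_nonempty [DecidableEq α] {C : Finset α} {V : Multiset (Finset α)} {k : ℕ}
    (h : k ≤ C.card) : (savWinners C V k).Nonempty := by
  obtain ⟨w, hw, hmax⟩ := Finset.exists_max_image (C.powersetCard k) (savScore V)
    (Finset.powersetCard_nonempty.2 h)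
  exact ⟨w, Finset.mem_filter.2 ⟨hw, hmax⟩⟩

end AuxGeneral

namespace Stmt18

variable {β : Type u} [DecidableEq β]

/-- Candidate type: a candidate `c(u)` for a vertex `u ∈ R ∪ B`, a fresh candidate of the
set `X`, or the distinguished candidate `p`. -/
abbrev Cand (β : Type u) := β ⊕ ℕ ⊕ Unit

/-- The distinguished candidate `p`. -/
def pc : Cand β := Sum.inr (Sum.inr ())

/-- The neighbors of the red vertex `r`. -/
def nbrR (Ed : Finset (β × β)) (r : β) : Finset β := (Ed.filter fun e => e.1 = r).image Prod.snd

/-- The neighbors of the blue vertex `b`. -/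
def nbrB (Ed : Finset (β × β)) (b : β) : Finset β := (Ed.filter fun e => e.2 = b).image Prod.fst

/-- The set `X` of `d` fresh candidates. -/
def Xset (d : ℕ) : Finset (Cand β) :=
  (Finset.range d).image fun j => (Sum.inr (Sum.inl j) : Cand β)

/-- The candidate set `C = C(R) ∪ C(B) ∪ {p} ∪ X`. -/
def Ctot (R B : Finset β) (d : ℕ) : Finset (Cand β) :=
  insert pc ((R ∪ B).image Sum.inl ∪ Xset d)

/-- The votes: one vote `{p} ∪ X`; `|R|` copies of `{p}`; for each `r ∈ R`, `|R|` copies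
of `{c(r)}`; and for each `r ∈ R`, one vote `v(r) = {c(r)} ∪ C(N_G(r))`. -/
def votes (Ed : Finset (β × β)) (R : Finset β) (d : ℕ) : Multiset (Finset (Cand β)) :=
  (insert pc (Xset d) : Finset (Cand β)) ::ₘ
    (Multiset.replicate R.card ({pc} : Finset (Cand β))
      + R.val.bind (fun r => Multiset.replicate R.card ({Sum.inl r} : Finset (Cand β)))
      + R.val.map (fun r => insert (Sum.inl r) ((nbrR Ed r).image Sum.inl)))

/-- contribution of a single vote to a candidate's individual score -/
noncomputable def trm (c : Cand β) (s : Finset (Cand β)) : ℝ :=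
  (if c ∈ s then (1:ℝ) else 0) / (s.card : ℝ)

lemma trm_nonneg (c : Cand β) (s : Finset (Cand β)) : 0 ≤ trm c s := by
  by_cases h : c ∈ s <;> simp [trm, h] <;> positivity

lemma trm_le_one (c : Cand β) (s : Finset (Cand β)) : trm c s ≤ 1 := by
  by_cases h : c ∈ s
  · simp only [trm, h, if_true]
    apply div_le_one_of_le₀
    · exact_mod_cast Finset.card_pos.2 ⟨c, h⟩
    · positivity
  · simp [trm, h]

lemma trm_of_notMem {c : Cand β} {s : Finset (Cand β)} (h : c ∉ s) : trm c s = 0 := by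
  simp [trm, h]

lemma trm_of_mem {c : Cand β} {s : Finset (Cand β)} (h : c ∈ s) : trm c s = 1 / (s.card : ℝ) := by
  simp [trm, h]

lemma indivScore_votes (Ed : Finset (β × β)) (R : Finset β) (d : ℕ)
    (C₂ : Finset (Cand β)) (c : Cand β) :
    indivScore ((votes Ed R d).map (· ∩ C₂)) c =
      trm c ((insert pc (Xset d) : Finset (Cand β)) ∩ C₂)
        + (R.card : ℝ) * trm c (({pc} : Finset (Cand β)) ∩ C₂)
        + ∑ r ∈ R, (R.card : ℝ) * trm c (({Sum.inl r} : Finset (Cand β)) ∩ C₂)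
        + ∑ r ∈ R, trm c ((insert (Sum.inl r) ((nbrR Ed r).image Sum.inl)) ∩ C₂) := by
  simp only [indivScore, votes, trm, Multiset.map_cons, Multiset.map_add, Multiset.map_bind,
    Multiset.map_map, Multiset.map_replicate, Multiset.sum_cons, Multiset.sum_add,
    Multiset.sum_bind, Multiset.sum_replicate, nsmul_eq_mul, Function.comp]
  rw [Finset.sum, Finset.sum]
  ring


lemma pc_notMem_Xset (d : ℕ) : (pc : Cand β) ∉ Xset d := by simp [pc, Xset]

lemma inl_notMem_Xset (u : β) (d : ℕ) : (Sum.inl u : Cand β) ∉ Xset d := by simp [Xset]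

lemma pc_mem_Ctot (R B : Finset β) (d : ℕ) : (pc : Cand β) ∈ Ctot R B d :=
  Finset.mem_insert_self _ _

lemma inl_mem_Ctot {u : β} {R B : Finset β} (d : ℕ) (hu : u ∈ R ∪ B) :
    (Sum.inl u : Cand β) ∈ Ctot R B d :=
  Finset.mem_insert_of_mem (Finset.mem_union_left _ (Finset.mem_image_of_mem _ hu))

lemma Xset_subset_Ctot (R B : Finset β) (d : ℕ) : Xset d ⊆ Ctot R B d := fun x hx =>
  Finset.mem_insert_of_mem (Finset.mem_union_right _ hx)

lemma card_Xset (d : ℕ) : (Xset (β := β) d).card = d := by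
  rw [Xset, Finset.card_image_of_injective _ (fun a b h => by simpa using h), Finset.card_range]

lemma card_Ctot (R B : Finset β) (d : ℕ) (hRB : Disjoint R B) :
    (Ctot R B d).card = R.card + B.card + d + 1 := by
  rw [Ctot, Finset.card_insert_of_notMem (by simp [pc, Xset]),
    Finset.card_union_of_disjoint (by
      simp only [Finset.disjoint_left, Finset.mem_image]
      rintro x ⟨u, _, rfl⟩
      exact inl_notMem_Xset u d),
    Finset.card_image_of_injective _ Sum.inl_injective,
    Finset.card_union_of_disjoint hRB, card_Xset]

section Scores

variable (Ed : Finset (β × β)) (R B : Finset β) (d : ℕ) (C' : Finset (Cand β))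

lemma indivScore_pc (hpc' : (pc : Cand β) ∉ C') :
    indivScore ((votes Ed R d).map (· ∩ (Ctot R B d \ C'))) pc
      = R.card + 1 / (((Xset (β := β) d \ C').card : ℝ) + 1) := by
  set C₂ := Ctot R B d \ C' with hC₂
  have hpc2 : (pc : Cand β) ∈ C₂ := Finset.mem_sdiff.2 ⟨pc_mem_Ctot R B d, hpc'⟩
  rw [indivScore_votes]
  have e0 : (insert pc (Xset d) : Finset (Cand β)) ∩ C₂ = insert pc (Xset d \ C') := by
    ext x
    simp only [Finset.mem_inter, Finset.mem_insert, Finset.mem_sdiff, hC₂]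
    constructor
    · rintro ⟨h1 | h1, _, h3⟩
      · exact Or.inl h1
      · exact Or.inr ⟨h1, h3⟩
    · rintro (rfl | ⟨hx, hxc⟩)
      · exact ⟨Or.inl rfl, pc_mem_Ctot R B d, hpc'⟩
      · exact ⟨Or.inr hx, Xset_subset_Ctot R B d hx, hxc⟩
  have e1 : ({pc} : Finset (Cand β)) ∩ C₂ = {pc} := Finset.singleton_inter_of_mem hpc2
  have e2 : ∑ r ∈ R, (R.card : ℝ) * trm pc (({Sum.inl r} : Finset (Cand β)) ∩ C₂) = 0 := by
    refine Finset.sum_eq_zero fun r _ => ?_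
    rw [trm_of_notMem (fun h => by simpa [pc] using (Finset.mem_inter.1 h).1), mul_zero]
  have e3 : ∑ r ∈ R, trm pc ((insert (Sum.inl r) ((nbrR Ed r).image Sum.inl)) ∩ C₂) = 0 := by
    refine Finset.sum_eq_zero fun r _ => ?_
    refine trm_of_notMem fun h => ?_
    have := (Finset.mem_inter.1 h).1
    simp [pc] at this
  rw [e0, e1, e2, e3, trm_of_mem (Finset.mem_insert_self _ _),
    Finset.card_insert_of_notMem (fun h => pc_notMem_Xset d (Finset.mem_sdiff.1 h).1)]
  have : trm (pc : Cand β) {pc} = 1 := by simp [trm]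
  rw [this]
  push_cast
  ring

lemma indivScore_inl_r (hRB : Disjoint R B) {r : β} (hrR : r ∈ R)
    (hrC' : (Sum.inl r : Cand β) ∉ C')
    (hnbrAll : ∀ r' ∈ R, nbrR Ed r' ⊆ B) :
    indivScore ((votes Ed R d).map (· ∩ (Ctot R B d \ C'))) (Sum.inl r)
      = R.card + 1 / (((nbrR Ed r \ B.filter fun b => (Sum.inl b : Cand β) ∈ C').card : ℝ) + 1) := by
  set Bf := B.filter (fun b => (Sum.inl b : Cand β) ∈ C') with hBf
  set C₂ := Ctot R B d \ C' with hC₂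
  have hrB : r ∉ B := Finset.disjoint_left.1 hRB hrR
  have hinl2 : (Sum.inl r : Cand β) ∈ C₂ :=
    Finset.mem_sdiff.2 ⟨inl_mem_Ctot d (Finset.mem_union_left _ hrR), hrC'⟩
  rw [indivScore_votes]
  have e0 : trm (Sum.inl r : Cand β) ((insert pc (Xset d) : Finset (Cand β)) ∩ C₂) = 0 := by
    refine trm_of_notMem fun h => ?_
    have := (Finset.mem_inter.1 h).1
    rcases Finset.mem_insert.1 this with h' | h'
    · simp [pc] at h'
    · exact inl_notMem_Xset r d h'
  have e1 : trm (Sum.inl r : Cand β) (({pc} : Finset (Cand β)) ∩ C₂) = 0 := by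
    refine trm_of_notMem fun h => ?_
    have := (Finset.mem_inter.1 h).1
    simp [pc] at this
  have e2 : ∑ r' ∈ R, (R.card : ℝ) * trm (Sum.inl r : Cand β) (({Sum.inl r'} : Finset (Cand β)) ∩ C₂)
      = R.card := by
    rw [Finset.sum_eq_single_of_mem r hrR]
    · rw [Finset.singleton_inter_of_mem hinl2]
      have : trm (Sum.inl r : Cand β) {Sum.inl r} = 1 := by simp [trm]
      rw [this, mul_one]
    · intro r' _ hne
      have : (Sum.inl r : Cand β) ∉ ({Sum.inl r'} : Finset (Cand β)) ∩ C₂ := by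
        intro h
        have := (Finset.mem_inter.1 h).1
        simp only [Finset.mem_singleton, Sum.inl.injEq] at this
        exact hne this.symm
      rw [trm_of_notMem this, mul_zero]
  have hvr : (insert (Sum.inl r) ((nbrR Ed r).image Sum.inl) : Finset (Cand β)) ∩ C₂
      = insert (Sum.inl r) ((nbrR Ed r \ Bf).image Sum.inl) := by
    ext x
    simp only [Finset.mem_inter, Finset.mem_insert, Finset.mem_image, Finset.mem_sdiff, hC₂]
    constructor
    · rintro ⟨h1 | ⟨b, hb, rfl⟩, _, h3⟩
      · exact Or.inl h1
      · exact Or.inr ⟨b, ⟨hb, fun hf => h3 (Finset.mem_filter.1 hf).2⟩, rfl⟩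
    · rintro (rfl | ⟨b, ⟨hb, hbf⟩, rfl⟩)
      · exact ⟨Or.inl rfl, (Finset.mem_sdiff.1 hinl2).1, (Finset.mem_sdiff.1 hinl2).2⟩
      · have hbB : b ∈ B := hnbrAll r hrR hb
        exact ⟨Or.inr ⟨b, hb, rfl⟩, inl_mem_Ctot d (Finset.mem_union_right _ hbB),
          fun hc => hbf (Finset.mem_filter.2 ⟨hbB, hc⟩)⟩
  have e3 : ∑ r' ∈ R, trm (Sum.inl r : Cand β)
        ((insert (Sum.inl r') ((nbrR Ed r').image Sum.inl)) ∩ C₂)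
      = 1 / (((nbrR Ed r \ Bf).card : ℝ) + 1) := by
    rw [Finset.sum_eq_single_of_mem r hrR]
    · rw [hvr, trm_of_mem (Finset.mem_insert_self _ _),
        Finset.card_insert_of_notMem (by
          rintro h
          obtain ⟨b, hb, hbe⟩ := Finset.mem_image.1 h
          exact hrB (hnbrAll _ hrR (Finset.mem_sdiff.1 (Sum.inl_injective hbe ▸ hb)).1)),
        Finset.card_image_of_injective _ Sum.inl_injective]
      push_cast
      ring
    · intro r' hr' hne
      refine trm_of_notMem fun h => ?_
      have := (Finset.mem_inter.1 h).1
      rcases Finset.mem_insert.1 this with h' | h'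
      · exact hne (Sum.inl_injective h'.symm)
      · obtain ⟨b, hb, hbe⟩ := Finset.mem_image.1 h'
        exact hrB (hnbrAll r' hr' (Sum.inl_injective hbe ▸ hb))
  rw [e0, e1, e2, e3]
  ring


lemma indivScore_le_card (hRB : Disjoint R B) (hR : R.Nonempty) {c : Cand β}
    (hc : c ∈ Ctot R B d) (hcp : c ≠ pc) (hcR : ∀ u ∈ R, c ≠ Sum.inl u) :
    indivScore ((votes Ed R d).map (· ∩ (Ctot R B d \ C'))) c ≤ R.card := by
  set C₂ := Ctot R B d \ C' with hC₂
  rw [indivScore_votes]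
  rw [Ctot] at hc
  rcases Finset.mem_insert.1 hc with rfl | hc2
  · exact absurd rfl hcp
  rcases Finset.mem_union.1 hc2 with hcI | hcX
  · obtain ⟨u, hu, rfl⟩ := Finset.mem_image.1 hcI
    have huR : u ∉ R := fun h => hcR u h rfl
    have t0 : trm (Sum.inl u : Cand β) ((insert pc (Xset d) : Finset (Cand β)) ∩ C₂) = 0 := by
      refine trm_of_notMem fun h => ?_
      rcases Finset.mem_insert.1 (Finset.mem_inter.1 h).1 with h' | h'
      · simp [pc] at h'
      · exact inl_notMem_Xset u d h'
    have t1 : trm (Sum.inl u : Cand β) (({pc} : Finset (Cand β)) ∩ C₂) = 0 := by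
      refine trm_of_notMem fun h => ?_
      have := (Finset.mem_inter.1 h).1
      simp [pc] at this
    have t2 : ∑ r' ∈ R, (R.card : ℝ)
        * trm (Sum.inl u : Cand β) (({Sum.inl r'} : Finset (Cand β)) ∩ C₂) = 0 := by
      refine Finset.sum_eq_zero fun r' hr' => ?_
      have : (Sum.inl u : Cand β) ∉ ({Sum.inl r'} : Finset (Cand β)) ∩ C₂ := by
        intro h
        have := (Finset.mem_inter.1 h).1
        simp only [Finset.mem_singleton, Sum.inl.injEq] at this
        exact huR (this ▸ hr')
      rw [trm_of_notMem this, mul_zero]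
    have t3 : ∑ r' ∈ R, trm (Sum.inl u : Cand β)
          ((insert (Sum.inl r') ((nbrR Ed r').image Sum.inl)) ∩ C₂)
        ≤ (R.card : ℝ) := by
      calc ∑ r' ∈ R, trm (Sum.inl u : Cand β)
            ((insert (Sum.inl r') ((nbrR Ed r').image Sum.inl)) ∩ C₂)
          ≤ ∑ _r' ∈ R, (1 : ℝ) := Finset.sum_le_sum fun i _ => trm_le_one _ _
        _ = R.card := by simp
    rw [t0, t1, t2]
    linarith [t3]
  · obtain ⟨j, _, rfl⟩ := by
      simpa only [Xset, Finset.mem_image, Finset.mem_range] using hcX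
    have t0 : trm (Sum.inr (Sum.inl j) : Cand β)
        ((insert pc (Xset d) : Finset (Cand β)) ∩ C₂) ≤ 1 := trm_le_one _ _
    have t1 : trm (Sum.inr (Sum.inl j) : Cand β) (({pc} : Finset (Cand β)) ∩ C₂) = 0 := by
      refine trm_of_notMem fun h => ?_
      have := (Finset.mem_inter.1 h).1
      simp [pc] at this
    have t2 : ∑ r' ∈ R, (R.card : ℝ)
        * trm (Sum.inr (Sum.inl j) : Cand β) (({Sum.inl r'} : Finset (Cand β)) ∩ C₂) = 0 := by
      refine Finset.sum_eq_zero fun r' _ => ?_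
      have : (Sum.inr (Sum.inl j) : Cand β) ∉ ({Sum.inl r'} : Finset (Cand β)) ∩ C₂ := by
        intro h
        have := (Finset.mem_inter.1 h).1
        simp at this
      rw [trm_of_notMem this, mul_zero]
    have t3 : ∑ r' ∈ R, trm (Sum.inr (Sum.inl j) : Cand β)
        ((insert (Sum.inl r') ((nbrR Ed r').image Sum.inl)) ∩ C₂) = 0 := by
      refine Finset.sum_eq_zero fun r' _ => ?_
      refine trm_of_notMem fun h => ?_
      rcases Finset.mem_insert.1 (Finset.mem_inter.1 h).1 with h' | h'
      · simp at h'
      · obtain ⟨b, _, hbe⟩ := Finset.mem_image.1 h'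
        simp at hbe
    have hn : (1 : ℝ) ≤ R.card := by
      exact_mod_cast Nat.one_le_iff_ne_zero.2 (Finset.card_ne_zero_of_mem hR.choose_spec)
    rw [t1, t2, t3]
    linarith [t0]

end Scores

/-- correctness of the reduction from Red-Blue Dominating Set to
destructive control by deleting candidates for SAV. -/
theorem dcdc_sav
    (R B : Finset β) (hRB : Disjoint R B) (Ed : Finset (β × β))
    (hEd : ∀ e ∈ Ed, e.1 ∈ R ∧ e.2 ∈ B)
    (hR : R.Nonempty)
    (d : ℕ) (hd : 1 ≤ d) (hdegR : ∀ r ∈ R, (nbrR Ed r).card = d)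
    (κ : ℕ) (hκ : κ ≤ B.card) :
    (∃ B' ⊆ B, B'.card ≤ κ ∧ ∀ r ∈ R, ∃ b ∈ B', (r, b) ∈ Ed) ↔
      (∃ C' ⊆ Ctot R B d \ {pc}, C'.card ≤ κ ∧
        ∀ w ∈ savWinners (Ctot R B d \ C')
            ((votes Ed R d).map (· ∩ (Ctot R B d \ C'))) R.card, pc ∉ w) := by
  classical
  have hnbrAll : ∀ r' ∈ R, nbrR Ed r' ⊆ B := by
    intro r' _ b hb
    obtain ⟨e, he, hee⟩ := Finset.mem_image.1 hb
    exact hee ▸ (hEd e (Finset.mem_filter.1 he).1).2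
  have hn1 : 1 ≤ R.card := Finset.card_pos.2 hR
  constructor
  · rintro ⟨B', hB'sub, hB'card, hdom⟩
    refine ⟨B'.image Sum.inl, ?_, ?_, ?_⟩
    · intro c hc
      obtain ⟨b, hb, rfl⟩ := Finset.mem_image.1 hc
      refine Finset.mem_sdiff.2 ⟨inl_mem_Ctot d (Finset.mem_union_right _ (hB'sub hb)), ?_⟩
      simp [pc]
    · exact Finset.card_image_le.trans hB'card
    · intro w hw hpw
      set C' := B'.image (Sum.inl : β → Cand β) with hC'def
      set C₂ := Ctot R B d \ C' with hC₂
      set V' := (votes Ed R d).map (· ∩ C₂) with hV'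
      obtain ⟨hwP, hwmax⟩ := Finset.mem_filter.1 hw
      obtain ⟨hwsub, hwcard⟩ := Finset.mem_powersetCard.1 hwP
      have himg : ∃ r ∈ R, (Sum.inl r : Cand β) ∉ w := by
        by_contra hno
        push_neg at hno
        have hsub : R.image (Sum.inl : β → Cand β) ⊆ w := by
          intro x hx
          obtain ⟨r, hr, rfl⟩ := Finset.mem_image.1 hx
          exact hno r hr
        have heq : R.image (Sum.inl : β → Cand β) = w :=
          Finset.eq_of_subset_of_card_le hsub (by
            rw [hwcard, Finset.card_image_of_injective _ Sum.inl_injective])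
        rw [← heq] at hpw
        obtain ⟨r, _, hre⟩ := Finset.mem_image.1 hpw
        simp [pc] at hre
      obtain ⟨r, hrR, hrw⟩ := himg
      have hrC' : (Sum.inl r : Cand β) ∉ C' := by
        intro h
        obtain ⟨b, hb, hbe⟩ := Finset.mem_image.1 h
        exact Finset.disjoint_left.1 hRB hrR (hB'sub (Sum.inl_injective hbe ▸ hb))
      have hpcC' : (pc : Cand β) ∉ C' := by
        intro h
        obtain ⟨b, _, hbe⟩ := Finset.mem_image.1 h
        simp [pc] at hbe
      have hXC : Xset (β := β) d \ C' = Xset d := by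
        apply Finset.Subset.antisymm Finset.sdiff_subset
        intro x hx
        refine Finset.mem_sdiff.2 ⟨hx, fun hc => ?_⟩
        obtain ⟨b, _, hbe⟩ := Finset.mem_image.1 hc
        obtain ⟨j, _, hje⟩ := by
          simpa only [Xset, Finset.mem_image, Finset.mem_range] using hx
        rw [← hje] at hbe
        simp at hbe
      have hscp : indivScore V' pc = R.card + 1 / ((d : ℝ) + 1) := by
        rw [hV', hC₂, indivScore_pc Ed R B d C' hpcC', hXC, card_Xset]
      obtain ⟨b, hbB', hrb⟩ := hdom r hrR
      have hbnbr : b ∈ nbrR Ed r :=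
        Finset.mem_image.2 ⟨(r, b), Finset.mem_filter.2 ⟨hrb, rfl⟩, rfl⟩
      set Bf := B.filter (fun b => (Sum.inl b : Cand β) ∈ C') with hBfdef
      have hbBf : b ∈ Bf :=
        Finset.mem_filter.2 ⟨hB'sub hbB', Finset.mem_image_of_mem _ hbB'⟩
      have hlt : (nbrR Ed r \ Bf).card < d := by
        have hss : nbrR Ed r \ Bf ⊂ nbrR Ed r := by
          refine (Finset.ssubset_iff_of_subset Finset.sdiff_subset).2 ⟨b, hbnbr, ?_⟩
          simp only [Finset.mem_sdiff, not_and, not_not]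
          exact fun _ => hbBf
        have := Finset.card_lt_card hss
        rwa [hdegR r hrR] at this
      have hscr : indivScore V' (Sum.inl r)
          = R.card + 1 / (((nbrR Ed r \ Bf).card : ℝ) + 1) := by
        rw [hV', hC₂, indivScore_inl_r Ed R B d C' hRB hrR hrC' hnbrAll]
      have key : indivScore V' pc < indivScore V' (Sum.inl r) := by
        rw [hscp, hscr]
        have h1 : ((nbrR Ed r \ Bf).card : ℝ) + 1 < (d : ℝ) + 1 := by
          exact_mod_cast Nat.add_lt_add_right hlt 1
        have h2 : (0 : ℝ) < ((nbrR Ed r \ Bf).card : ℝ) + 1 := by positivity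
        have := one_div_lt_one_div_of_lt h2 h1
        linarith
      have hw' : insert (Sum.inl r) (w.erase pc) ∈ C₂.powersetCard R.card := by
        refine Finset.mem_powersetCard.2 ⟨?_, ?_⟩
        · intro x hx
          rcases Finset.mem_insert.1 hx with rfl | hx'
          · exact Finset.mem_sdiff.2 ⟨inl_mem_Ctot d (Finset.mem_union_left _ hrR), hrC'⟩
          · exact hwsub (Finset.mem_of_mem_erase hx')
        · rw [Finset.card_insert_of_notMem (fun h => hrw (Finset.mem_of_mem_erase h)),
            Finset.card_erase_of_mem hpw, hwcard]
          omega
      have hle := hwmax _ hw'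
      rw [savScore_swap V' w pc (Sum.inl r) hpw hrw] at hle
      linarith
  · rintro ⟨C', hC'sub, hC'card, hwin⟩
    set C₂ := Ctot R B d \ C' with hC₂
    set V' := (votes Ed R d).map (· ∩ C₂) with hV'
    have hC'tot : C' ⊆ Ctot R B d := hC'sub.trans Finset.sdiff_subset
    have hpcC' : (pc : Cand β) ∉ C' := fun h => by
      have := (Finset.mem_sdiff.1 (hC'sub h)).2
      simp at this
    have hcard2 : R.card ≤ C₂.card := by
      have h1 : C₂.card = (Ctot R B d).card - C'.card := Finset.card_sdiff_of_subset hC'tot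
      rw [card_Ctot R B d hRB] at h1
      omega
    obtain ⟨w, hw⟩ := savWinners_nonempty (V := V') (k := R.card) hcard2
    have hpw : pc ∉ w := hwin w hw
    obtain ⟨hwP, hwmax⟩ := Finset.mem_filter.1 hw
    obtain ⟨hwsub, hwcard⟩ := Finset.mem_powersetCard.1 hwP
    have hpc2 : (pc : Cand β) ∈ C₂ := Finset.mem_sdiff.2 ⟨pc_mem_Ctot R B d, hpcC'⟩
    have hbeat : ∀ c ∈ w, indivScore V' pc < indivScore V' c := by
      intro c hcw
      have hw'mem : insert pc (w.erase c) ∈ C₂.powersetCard R.card := by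
        refine Finset.mem_powersetCard.2 ⟨?_, ?_⟩
        · intro x hx
          rcases Finset.mem_insert.1 hx with rfl | hx'
          · exact hpc2
          · exact hwsub (Finset.mem_of_mem_erase hx')
        · rw [Finset.card_insert_of_notMem (fun h => hpw (Finset.mem_of_mem_erase h)),
            Finset.card_erase_of_mem hcw, hwcard]
          omega
      have hswap := savScore_swap V' w c pc hcw hpw
      have hle := hwmax _ hw'mem
      rw [hswap] at hle
      rcases lt_or_eq_of_le (by linarith : indivScore V' pc ≤ indivScore V' c) with h | h
      · exact h
      · exfalso
        have heq2 : savScore V' (insert pc (w.erase c)) = savScore V' w := by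
          rw [hswap, ← h]
          ring
        have hwin' : insert pc (w.erase c) ∈ savWinners C₂ V' R.card :=
          Finset.mem_filter.2 ⟨hw'mem, fun w'' hw'' => (hwmax w'' hw'').trans_eq heq2.symm⟩
        exact hwin _ hwin' (Finset.mem_insert_self _ _)
    have hscp := indivScore_pc Ed R B d C' hpcC'
    have hpcgt : (R.card : ℝ) < indivScore V' pc := by
      rw [hV', hC₂, hscp]
      have : (0 : ℝ) < 1 / (((Xset (β := β) d \ C').card : ℝ) + 1) := by positivity
      linarith
    have hwR : ∀ c ∈ w, ∃ u ∈ R, c = Sum.inl u := by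
      intro c hcw
      by_contra hno
      push_neg at hno
      have hcC : c ∈ Ctot R B d := (Finset.mem_sdiff.1 (hwsub hcw)).1
      have hcp : c ≠ pc := fun h => hpw (h ▸ hcw)
      have hb := indivScore_le_card Ed R B d C' hRB hR hcC hcp hno
      linarith [hbeat c hcw, hpcgt]
    have hweq : w = R.image Sum.inl := by
      have hsub : w ⊆ R.image Sum.inl := by
        intro c hcw
        obtain ⟨u, hu, rfl⟩ := hwR c hcw
        exact Finset.mem_image_of_mem _ hu
      exact Finset.eq_of_subset_of_card_le hsub (by
        rw [hwcard, Finset.card_image_of_injective _ Sum.inl_injective])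
    set Bf := B.filter (fun b => (Sum.inl b : Cand β) ∈ C') with hBfdef
    refine ⟨Bf, Finset.filter_subset _ _, ?_, ?_⟩
    · calc Bf.card = (Bf.image (Sum.inl : β → Cand β)).card :=
            (Finset.card_image_of_injective _ Sum.inl_injective).symm
        _ ≤ C'.card := Finset.card_le_card (by
            rintro x hx
            obtain ⟨b, hb, rfl⟩ := Finset.mem_image.1 hx
            exact (Finset.mem_filter.1 hb).2)
        _ ≤ κ := hC'card
    · intro r hrR
      have hrw : (Sum.inl r : Cand β) ∈ w := hweq ▸ Finset.mem_image_of_mem _ hrR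
      have hrC' : (Sum.inl r : Cand β) ∉ C' := (Finset.mem_sdiff.1 (hwsub hrw)).2
      have hr1 := indivScore_inl_r Ed R B d C' hRB hrR hrC' hnbrAll
      have hb := hbeat _ hrw
      rw [hV', hC₂, hscp, hr1] at hb
      have htle : (Xset (β := β) d \ C').card ≤ d :=
        le_trans (Finset.card_le_card Finset.sdiff_subset) (le_of_eq (card_Xset d))
      have hmlt : (nbrR Ed r \ Bf).card < (Xset (β := β) d \ C').card := by
        by_contra hge
        push_neg at hge
        have h1 : ((Xset (β := β) d \ C').card : ℝ) + 1 ≤ ((nbrR Ed r \ Bf).card : ℝ) + 1 := by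
          exact_mod_cast Nat.add_le_add_right hge 1
        have h2 : (0 : ℝ) < ((Xset (β := β) d \ C').card : ℝ) + 1 := by positivity
        have := one_div_le_one_div_of_le h2 h1
        linarith
      have hmltd : (nbrR Ed r \ Bf).card < d := lt_of_lt_of_le hmlt htle
      have hne : nbrR Ed r \ Bf ≠ nbrR Ed r := fun h => by
        rw [h, hdegR r hrR] at hmltd
        omega
      have hex : ∃ b ∈ nbrR Ed r, b ∈ Bf := by
        by_contra hno
        push_neg at hno
        refine hne (Finset.Subset.antisymm Finset.sdiff_subset ?_)
        intro a ha
        exact Finset.mem_sdiff.2 ⟨ha, fun hf => hno a ha hf⟩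
      obtain ⟨b, hbn, hbf⟩ := hex
      refine ⟨b, hbf, ?_⟩
      obtain ⟨e, he, hee⟩ := Finset.mem_image.1 hbn
      have h1 := (Finset.mem_filter.1 he).2
      have h2 := (Finset.mem_filter.1 he).1
      have : e = (r, b) := Prod.ext h1 hee
      exact this ▸ h2

end Stmt18
end

section
/- Let ω be a Thiele function with ω(2) < 2ω(1), and let (A, H, κ) be a Regular Set Packing instance: A a finite set, H a finite collection of d-element subsets of A for some d ≥ 1, and κ an integer with 1 ≤ κ ≤ |H|. Construct the election with candidates C = {c(H) : H ∈ H} ∪ {p}, where p is fresh; votes V: d copies of the vote {p} and, for each a ∈ A, one vote v(a) = {c(H) : a ∈ H ∈ H}; committee size k = κ; and a tie-breaking linear order ⊳ on C in which p is last. Then H contains κ pairwise disjoint sets if and only if there exists C' ⊆ C ∖ {p} with |C'| ≤ |H| − κ such that p is not contained in the seqω winning κ-committee of (C ∖ C', V_{C∖C'}) with respect to ⊳. -/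
open Finset

attribute [local instance] Classical.propDecidable

universe u

variable {α : Type u}

set_option linter.unusedSectionVars false

namespace Stmt19

variable {β : Type u} [DecidableEq β]

/-- Candidate type: a candidate `c(H)` for `H ∈ 𝓗`, or the distinguished candidate `p`. -/
abbrev Cand (β : Type u) := Finset β ⊕ Unit

/-- The distinguished candidate `p`. -/
def pc : Cand β := Sum.inr ()

/-- The candidate `c(H)`. -/
def cH (s : Finset β) : Cand β := Sum.inl s

/-- The candidate set `C = {c(H) : H ∈ 𝓗} ∪ {p}`. -/
def Ctot (H : Finset (Finset β)) : Finset (Cand β) := insert pc (H.image cH)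

/-- The votes: `d` copies of `{p}` and, for each `a ∈ A`, the vote
`v(a) = {c(H) : a ∈ H ∈ 𝓗}`. -/
def votes (A : Finset β) (H : Finset (Finset β)) (d : ℕ) : Multiset (Finset (Cand β)) :=
  Multiset.replicate d ({pc} : Finset (Cand β))
    + A.val.map (fun a => (H.filter fun s => a ∈ s).image cH)


section Aux

variable {γ : Type u} [DecidableEq γ]

lemma seqC_succ (ω : ℕ → ℝ) (pri : γ → ℕ) (V : Multiset (Finset γ)) (C : Finset γ) (k : ℕ) :
    seqCommittee ω pri V C (k + 1)
      = seqCommittee ω pri V C k ∪ seqNext ω pri V C (seqCommittee ω pri V C k) := rfl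

lemma seq_mono_step (ω : ℕ → ℝ) (pri : γ → ℕ) (V : Multiset (Finset γ)) (C : Finset γ) (k : ℕ) :
    seqCommittee ω pri V C k ⊆ seqCommittee ω pri V C (k + 1) :=
  Finset.subset_union_left

lemma seq_mono (ω : ℕ → ℝ) (pri : γ → ℕ) (V : Multiset (Finset γ)) (C : Finset γ)
    {k l : ℕ} (h : k ≤ l) : seqCommittee ω pri V C k ⊆ seqCommittee ω pri V C l := by
  induction h with
  | refl => exact Finset.Subset.rfl
  | step h ih => exact ih.trans (seq_mono_step ω pri V C _)

lemma seqNext_subset (ω : ℕ → ℝ) (pri : γ → ℕ) (V : Multiset (Finset γ)) (C w : Finset γ) :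
    seqNext ω pri V C w ⊆ C \ w :=
  (Finset.filter_subset _ _).trans (Finset.filter_subset _ _)

lemma seqNext_nonempty (ω : ℕ → ℝ) (pri : γ → ℕ) (V : Multiset (Finset γ)) (C w : Finset γ)
    (h : (C \ w).Nonempty) : (seqNext ω pri V C w).Nonempty := by
  obtain ⟨c, hc, hmax⟩ := Finset.exists_max_image (C \ w) (marginContrib ω V w) h
  have h1 : (maxMarginSet ω V C w).Nonempty := ⟨c, Finset.mem_filter.2 ⟨hc, hmax⟩⟩
  obtain ⟨c', hc', hmin⟩ := Finset.exists_min_image _ pri h1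
  exact ⟨c', Finset.mem_filter.2 ⟨hc', hmin⟩⟩

lemma seqNext_eq_of_mem (ω : ℕ → ℝ) (pri : γ → ℕ) (V : Multiset (Finset γ)) (C w : Finset γ)
    (hinj : Set.InjOn pri (C : Set γ)) {c : γ} (hc : c ∈ seqNext ω pri V C w) :
    seqNext ω pri V C w = {c} := by
  apply Finset.eq_singleton_iff_unique_mem.2
  refine ⟨hc, fun x hx => ?_⟩
  have hxm := Finset.mem_filter.1 hx
  have hcm := Finset.mem_filter.1 hc
  have h1 : pri x ≤ pri c := hxm.2 c hcm.1
  have h2 : pri c ≤ pri x := hcm.2 x hxm.1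
  have hxC : x ∈ C := (Finset.mem_sdiff.1 ((Finset.filter_subset _ _) hxm.1)).1
  have hcC : c ∈ C := (Finset.mem_sdiff.1 ((Finset.filter_subset _ _) hcm.1)).1
  exact hinj (Finset.mem_coe.2 hxC) (Finset.mem_coe.2 hcC) (le_antisymm h1 h2)

lemma card_inter_insert (v w : Finset γ) (c : γ) (hc : c ∉ w) :
    (v ∩ insert c w).card = (v ∩ w).card + (if c ∈ v then 1 else 0) := by
  by_cases h : c ∈ v
  · have he : v ∩ insert c w = insert c (v ∩ w) := by
      ext x; simp only [Finset.mem_inter, Finset.mem_insert]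
      constructor
      · rintro ⟨hxv, rfl | hx⟩
        · exact Or.inl rfl
        · exact Or.inr ⟨hxv, hx⟩
      · rintro (rfl | ⟨hxv, hx⟩)
        · exact ⟨h, Or.inl rfl⟩
        · exact ⟨hxv, Or.inr hx⟩
    rw [he, Finset.card_insert_of_notMem (by simp [hc])]
    simp [h]
  · have he : v ∩ insert c w = v ∩ w := by
      ext x; simp only [Finset.mem_inter, Finset.mem_insert]
      constructor
      · rintro ⟨hxv, hx | hx⟩
        · exact absurd (hx ▸ hxv) h
        · exact ⟨hxv, hx⟩
      · rintro ⟨hxv, hx⟩; exact ⟨hxv, Or.inr hx⟩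
    simp [he, h]

end Aux


lemma cH_injective : Function.Injective (cH : Finset β → Cand β) :=
  fun _ _ h => Sum.inl.inj h

lemma pc_ne_cH (s : Finset β) : (pc : Cand β) ≠ cH s := by
  simp [pc, cH]

/-- The vote of `a` with candidate family `G`. -/
def vote (G : Finset (Finset β)) (a : β) : Finset (Cand β) :=
  (G.filter fun s => a ∈ s).image cH

/-- The votes for family `G`. -/
def Vg (A : Finset β) (G : Finset (Finset β)) (d : ℕ) : Multiset (Finset (Cand β)) :=
  Multiset.replicate d ({pc} : Finset (Cand β)) + A.val.map (vote G)

lemma votes_eq (A : Finset β) (H : Finset (Finset β)) (d : ℕ) : votes A H d = Vg A H d := rfl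

lemma pc_notMem_image (W : Finset (Finset β)) : (pc : Cand β) ∉ W.image cH := by
  simp only [Finset.mem_image, not_exists, not_and]
  intro s _ h
  exact pc_ne_cH s h.symm

lemma pc_notMem_vote (G : Finset (Finset β)) (a : β) : (pc : Cand β) ∉ vote G a :=
  pc_notMem_image _

lemma cH_mem_image {s : Finset β} {W : Finset (Finset β)} : cH s ∈ W.image cH ↔ s ∈ W := by
  constructor
  · rintro h
    obtain ⟨t, ht, hts⟩ := Finset.mem_image.1 h
    exact (cH_injective hts) ▸ ht
  · exact fun h => Finset.mem_image_of_mem _ h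

lemma cH_mem_vote {s : Finset β} {G : Finset (Finset β)} {a : β} :
    cH s ∈ vote G a ↔ s ∈ G ∧ a ∈ s := by
  rw [vote, cH_mem_image, Finset.mem_filter]

lemma restrict_cands (H : Finset (Finset β)) (C' : Finset (Cand β)) (hC' : C' ⊆ H.image cH) :
    Ctot H \ C' = Ctot (H.filter fun s => cH s ∉ C') := by
  ext x
  simp only [Ctot, Finset.mem_sdiff, Finset.mem_insert, Finset.mem_image, Finset.mem_filter]
  constructor
  · rintro ⟨hx | ⟨s, hs, rfl⟩, hnx⟩
    · exact Or.inl hx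
    · exact Or.inr ⟨s, ⟨hs, hnx⟩, rfl⟩
  · rintro (rfl | ⟨s, ⟨hs, hns⟩, rfl⟩)
    · exact ⟨Or.inl rfl, fun hc => pc_notMem_image H (hC' hc)⟩
    · exact ⟨Or.inr ⟨s, hs, rfl⟩, hns⟩

lemma restrict_votes (A : Finset β) (H : Finset (Finset β)) (d : ℕ)
    (C' : Finset (Cand β)) (hC' : C' ⊆ H.image cH) :
    (votes A H d).map (· ∩ (Ctot H \ C')) = Vg A (H.filter fun s => cH s ∉ C') d := by
  have hpc : (pc : Cand β) ∈ Ctot H \ C' := by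
    refine Finset.mem_sdiff.2 ⟨Finset.mem_insert_self _ _, fun hc => ?_⟩
    exact pc_notMem_image H (hC' hc)
  rw [votes_eq, Vg, Vg, Multiset.map_add, Multiset.map_replicate, Multiset.map_map]
  congr 1
  · rw [Finset.singleton_inter_of_mem hpc]
  · apply Multiset.map_congr rfl
    intro a _
    ext x
    simp only [Function.comp_apply, Finset.mem_inter, vote, Finset.mem_image,
      Finset.mem_filter, Finset.mem_sdiff, Ctot, Finset.mem_insert]
    constructor
    · rintro ⟨⟨s, ⟨hsH, has⟩, rfl⟩, _, hnx⟩
      exact ⟨s, ⟨⟨hsH, hnx⟩, has⟩, rfl⟩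
    · rintro ⟨s, ⟨⟨hsH, hns⟩, has⟩, rfl⟩
      exact ⟨⟨s, ⟨hsH, has⟩, rfl⟩, Or.inr ⟨s, hsH, rfl⟩, hns⟩


section Margins

variable (ω : ℕ → ℝ) (A : Finset β) (G : Finset (Finset β)) (d : ℕ)

lemma thiele_Vg (w : Finset (Cand β)) :
    thieleScore ω (Vg A G d) w
      = d * ω (({pc} : Finset (Cand β)) ∩ w).card + ∑ a ∈ A, ω ((vote G a ∩ w).card) := by
  rw [thieleScore, Vg, Multiset.map_add, Multiset.sum_add, Multiset.map_replicate,
    Multiset.sum_replicate, nsmul_eq_mul, Multiset.map_map]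
  rfl

lemma margin_Vg (w : Finset (Cand β)) (c : Cand β) :
    marginContrib ω (Vg A G d) w c
      = d * (ω (({pc} : Finset (Cand β)) ∩ insert c w).card
              - ω (({pc} : Finset (Cand β)) ∩ w).card)
        + ∑ a ∈ A, (ω ((vote G a ∩ insert c w).card) - ω ((vote G a ∩ w).card)) := by
  rw [marginContrib, thiele_Vg, thiele_Vg, Finset.sum_sub_distrib]
  ring

lemma margin_pc (hω0 : ω 0 = 0) (w : Finset (Cand β)) (hw : (pc : Cand β) ∉ w) :
    marginContrib ω (Vg A G d) w pc = d * ω 1 := by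
  rw [margin_Vg]
  have h1 : ({pc} : Finset (Cand β)) ∩ insert pc w = {pc} :=
    Finset.singleton_inter_of_mem (Finset.mem_insert_self _ _)
  have h2 : ({pc} : Finset (Cand β)) ∩ w = ∅ := Finset.singleton_inter_of_notMem hw
  have h3 : ∀ a ∈ A, ω ((vote G a ∩ insert pc w).card) - ω ((vote G a ∩ w).card) = 0 := by
    intro a _
    rw [card_inter_insert _ _ _ hw, if_neg (pc_notMem_vote G a)]
    simp
  rw [Finset.sum_congr rfl h3, h1, h2]
  simp [hω0]

lemma margin_cH (w : Finset (Cand β)) (s : Finset β) (hsG : s ∈ G) (hc : cH s ∉ w) :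
    marginContrib ω (Vg A G d) w (cH s)
      = ∑ a ∈ A, (if a ∈ s
          then ω ((vote G a ∩ w).card + 1) - ω ((vote G a ∩ w).card) else 0) := by
  rw [margin_Vg]
  have h1 : ({pc} : Finset (Cand β)) ∩ insert (cH s) w = ({pc} : Finset (Cand β)) ∩ w := by
    by_cases hw : (pc : Cand β) ∈ w
    · rw [Finset.singleton_inter_of_mem (Finset.mem_insert_of_mem hw),
        Finset.singleton_inter_of_mem hw]
    · rw [Finset.singleton_inter_of_notMem hw, Finset.singleton_inter_of_notMem]
      simp only [Finset.mem_insert, not_or]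
      exact ⟨pc_ne_cH s, hw⟩
  rw [h1, sub_self, mul_zero, zero_add]
  apply Finset.sum_congr rfl
  intro a _
  rw [card_inter_insert _ _ _ hc]
  by_cases ha : a ∈ s
  · rw [if_pos ha, if_pos (cH_mem_vote.2 ⟨hsG, ha⟩)]
  · rw [if_neg ha, if_neg (fun h => ha (cH_mem_vote.1 h).2)]
    simp

lemma sum_indicator_card (s : Finset β) (hsA : s ⊆ A) (x : ℝ) :
    ∑ a ∈ A, (if a ∈ s then x else 0) = s.card * x := by
  rw [Finset.sum_ite_mem]
  have : A ∩ s = s := Finset.inter_eq_right.2 hsA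
  rw [this, Finset.sum_const, nsmul_eq_mul]

lemma margin_cH_fresh (hω0 : ω 0 = 0) (w : Finset (Cand β)) (s : Finset β)
    (hsG : s ∈ G) (hc : cH s ∉ w) (hsA : s ⊆ A) (hcard : s.card = d)
    (hfree : ∀ a ∈ s, vote G a ∩ w = ∅) :
    marginContrib ω (Vg A G d) w (cH s) = d * ω 1 := by
  rw [margin_cH ω A G d w s hsG hc]
  have h : ∀ a ∈ A, (if a ∈ s
      then ω ((vote G a ∩ w).card + 1) - ω ((vote G a ∩ w).card) else 0)
      = (if a ∈ s then ω 1 else 0) := by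
    intro a _
    by_cases ha : a ∈ s
    · rw [if_pos ha, if_pos ha, hfree a ha]
      simp [hω0]
    · rw [if_neg ha, if_neg ha]
  rw [Finset.sum_congr rfl h, sum_indicator_card A s hsA, hcard]

lemma margin_cH_overlap (hω0 : ω 0 = 0) (hω : ω 2 < 2 * ω 1)
    (W : Finset (Finset β)) (hWG : W ⊆ G)
    (hW : ∀ u ∈ W, ∀ u' ∈ W, u ≠ u' → Disjoint u u')
    (s : Finset β) (hsG : s ∈ G) (hsW : s ∉ W) (hsA : s ⊆ A) (hcard : s.card = d)
    (t : Finset β) (htW : t ∈ W) (hnd : ¬ Disjoint s t) :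
    marginContrib ω (Vg A G d) (W.image cH) (cH s) < d * ω 1 := by
  have hc : cH s ∉ W.image cH := fun h => hsW (cH_mem_image.1 h)
  rw [margin_cH ω A G d _ s hsG hc]
  obtain ⟨a₀, ha₀s, ha₀t⟩ := Finset.not_disjoint_iff.1 hnd
  have hle1 : ∀ a ∈ s, (vote G a ∩ W.image cH).card ≤ 1 := by
    intro a _
    apply Finset.card_le_one.2
    intro x hx y hy
    obtain ⟨u, hu, rfl⟩ := Finset.mem_image.1 (Finset.mem_of_mem_inter_right hx)
    obtain ⟨u', hu', rfl⟩ := Finset.mem_image.1 (Finset.mem_of_mem_inter_right hy)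
    have hau : a ∈ u := (cH_mem_vote.1 (Finset.mem_of_mem_inter_left hx)).2
    have hau' : a ∈ u' := (cH_mem_vote.1 (Finset.mem_of_mem_inter_left hy)).2
    congr 1
    by_contra hne
    exact Finset.disjoint_left.1 (hW u hu u' hu' hne) hau hau'
  have hterm : ∀ a ∈ s,
      ω ((vote G a ∩ W.image cH).card + 1) - ω ((vote G a ∩ W.image cH).card) ≤ ω 1 := by
    intro a ha
    rcases Nat.le_one_iff_eq_zero_or_eq_one.1 (hle1 a ha) with h | h
    · rw [h]; simp [hω0]
    · rw [h]; linarith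
  have hstrict : ω ((vote G a₀ ∩ W.image cH).card + 1)
      - ω ((vote G a₀ ∩ W.image cH).card) < ω 1 := by
    have h1 : (vote G a₀ ∩ W.image cH).card = 1 := by
      refine le_antisymm (hle1 a₀ ha₀s) (Finset.card_pos.2 ?_)
      exact ⟨cH t, Finset.mem_inter.2 ⟨cH_mem_vote.2 ⟨hWG htW, ha₀t⟩,
        Finset.mem_image_of_mem _ htW⟩⟩
    rw [h1]; linarith
  have hsum : (∑ a ∈ A, (if a ∈ s then ω 1 else 0)) = d * ω 1 := by
    rw [sum_indicator_card A s hsA, hcard]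
  rw [← hsum]
  apply Finset.sum_lt_sum
  · intro a _
    by_cases ha : a ∈ s
    · rw [if_pos ha, if_pos ha]; exact hterm a ha
    · rw [if_neg ha, if_neg ha]
  · refine ⟨a₀, hsA ha₀s, ?_⟩
    rw [if_pos ha₀s, if_pos ha₀s]
    exact hstrict

end Margins


lemma Ctot_mono {G H : Finset (Finset β)} (h : G ⊆ H) : Ctot G ⊆ Ctot H :=
  Finset.insert_subset_insert pc (Finset.image_subset_image h)

theorem backward_invariant
    (ω : ℕ → ℝ) (hω0 : ω 0 = 0) (hω : ω 2 < 2 * ω 1)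
    (A : Finset β) (H G : Finset (Finset β)) (d : ℕ)
    (hH : ∀ s ∈ H, s ⊆ A ∧ s.card = d) (hGH : G ⊆ H)
    (pri : Cand β → ℕ) (hinj : Set.InjOn pri (Ctot G : Set (Cand β)))
    (j : ℕ)
    (hp : pc ∉ seqCommittee ω pri (Vg A G d) (Ctot G) j) :
    ∃ W ⊆ G, W.image cH = seqCommittee ω pri (Vg A G d) (Ctot G) j ∧ W.card = j ∧
      ∀ u ∈ W, ∀ u' ∈ W, u ≠ u' → Disjoint u u' := by
  induction j with
  | zero =>
    exact ⟨∅, Finset.empty_subset _, by simp [seqCommittee], by simp, by simp⟩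
  | succ j ih =>
    have hpj : pc ∉ seqCommittee ω pri (Vg A G d) (Ctot G) j :=
      fun h => hp (seq_mono_step ω pri _ _ j h)
    obtain ⟨W, hWG, hWim, hWcard, hWdisj⟩ := ih hpj
    set w := seqCommittee ω pri (Vg A G d) (Ctot G) j with hw
    have hpcmem : (pc : Cand β) ∈ Ctot G \ w :=
      Finset.mem_sdiff.2 ⟨Finset.mem_insert_self _ _, hpj⟩
    obtain ⟨c, hc⟩ := seqNext_nonempty ω pri (Vg A G d) (Ctot G) w ⟨pc, hpcmem⟩
    have hcCw : c ∈ Ctot G \ w := seqNext_subset ω pri _ _ _ hc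
    have hcw1 : c ∈ seqCommittee ω pri (Vg A G d) (Ctot G) (j + 1) :=
      Finset.mem_union_right _ hc
    have hcne : c ≠ pc := fun h => hp (h ▸ hcw1)
    obtain ⟨s, hsG, rfl⟩ : ∃ s ∈ G, cH s = c := by
      rcases Finset.mem_insert.1 (Finset.mem_sdiff.1 hcCw).1 with h | h
      · exact absurd h hcne
      · obtain ⟨s, hs, rfl⟩ := Finset.mem_image.1 h; exact ⟨s, hs, rfl⟩
    have hsW : s ∉ W := fun h =>
      (Finset.mem_sdiff.1 hcCw).2 (hWim ▸ Finset.mem_image_of_mem cH h)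
    have hmax : marginContrib ω (Vg A G d) w pc ≤ marginContrib ω (Vg A G d) w (cH s) :=
      (Finset.mem_filter.1 ((Finset.filter_subset _ _) hc)).2 pc hpcmem
    have hmpc : marginContrib ω (Vg A G d) w pc = d * ω 1 := margin_pc ω A G d hω0 w hpj
    have hdisjs : ∀ t ∈ W, Disjoint s t := by
      intro t htW
      by_contra hnd
      have hlt := margin_cH_overlap ω A G d hω0 hω W hWG hWdisj s hsG hsW
        (hH s (hGH hsG)).1 (hH s (hGH hsG)).2 t htW hnd
      rw [hWim] at hlt
      rw [hmpc] at hmax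
      linarith
    have hnext : seqNext ω pri (Vg A G d) (Ctot G) w = {cH s} :=
      seqNext_eq_of_mem ω pri (Vg A G d) (Ctot G) w hinj hc
    refine ⟨insert s W, Finset.insert_subset hsG hWG, ?_, ?_, ?_⟩
    · rw [Finset.image_insert, hWim, seqC_succ, ← hw, hnext, Finset.insert_eq, Finset.union_comm]
    · rw [Finset.card_insert_of_notMem hsW, hWcard]
    · intro u hu u' hu' hne
      rcases Finset.mem_insert.1 hu with rfl | hu <;>
        rcases Finset.mem_insert.1 hu' with h' | hu'
      · exact absurd h'.symm hne
      · exact hdisjs u' hu'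
      · exact (h' ▸ hdisjs u hu).symm
      · exact hWdisj u hu u' hu' hne

theorem forward_invariant
    (ω : ℕ → ℝ) (hω0 : ω 0 = 0)
    (A : Finset β) (H G : Finset (Finset β)) (d : ℕ)
    (hH : ∀ s ∈ H, s ⊆ A ∧ s.card = d) (hGH : G ⊆ H)
    (hGdisj : ∀ u ∈ G, ∀ u' ∈ G, u ≠ u' → Disjoint u u')
    (pri : Cand β → ℕ) (hinj : Set.InjOn pri (Ctot G : Set (Cand β)))
    (hpri : ∀ s ∈ G, pri (cH s : Cand β) < pri pc)
    (j : ℕ) (hj : j ≤ G.card) :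
    ∃ W ⊆ G, W.image cH = seqCommittee ω pri (Vg A G d) (Ctot G) j ∧ W.card = j ∧
      pc ∉ seqCommittee ω pri (Vg A G d) (Ctot G) j := by
  induction j with
  | zero =>
    exact ⟨∅, Finset.empty_subset _, by simp [seqCommittee], by simp, by simp [seqCommittee]⟩
  | succ j ih =>
    obtain ⟨W, hWG, hWim, hWcard, hpj⟩ := ih (le_trans (Nat.le_succ j) hj)
    set w := seqCommittee ω pri (Vg A G d) (Ctot G) j with hw
    have hpcmem : (pc : Cand β) ∈ Ctot G \ w :=
      Finset.mem_sdiff.2 ⟨Finset.mem_insert_self _ _, hpj⟩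
    have hsd : Ctot G \ w = insert pc ((G \ W).image cH) := by
      rw [← hWim]
      ext x
      simp only [Ctot, Finset.mem_sdiff, Finset.mem_insert, Finset.mem_image,
        Finset.mem_sdiff]
      constructor
      · rintro ⟨hx | ⟨u, hu, rfl⟩, hnx⟩
        · exact Or.inl hx
        · exact Or.inr ⟨u, ⟨hu, fun h => hnx ⟨u, h, rfl⟩⟩, rfl⟩
      · rintro (rfl | ⟨u, ⟨huG, huW⟩, rfl⟩)
        · refine ⟨Or.inl rfl, ?_⟩
          rintro ⟨u, hu, he⟩
          exact pc_ne_cH u he.symm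
        · refine ⟨Or.inr ⟨u, huG, rfl⟩, ?_⟩
          rintro ⟨u', hu', he⟩
          exact huW (cH_injective he ▸ hu')
    have hfresh : ∀ t ∈ G \ W, marginContrib ω (Vg A G d) w (cH t) = d * ω 1 := by
      intro t ht
      obtain ⟨htG, htW⟩ := Finset.mem_sdiff.1 ht
      apply margin_cH_fresh ω A G d hω0 w t htG
      · rw [← hWim]; exact fun h => htW (cH_mem_image.1 h)
      · exact (hH t (hGH htG)).1
      · exact (hH t (hGH htG)).2
      · intro a hat
        rw [← hWim]
        apply Finset.eq_empty_iff_forall_notMem.2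
        intro x hx
        obtain ⟨u, hu, rfl⟩ := Finset.mem_image.1 (Finset.mem_of_mem_inter_right hx)
        have hau : a ∈ u := (cH_mem_vote.1 (Finset.mem_of_mem_inter_left hx)).2
        have hne : u ≠ t := fun h => htW (h ▸ hu)
        exact Finset.disjoint_left.1 (hGdisj u (hWG hu) t htG hne) hau hat
    have hall : ∀ c ∈ Ctot G \ w, marginContrib ω (Vg A G d) w c = d * ω 1 := by
      intro c hc
      rw [hsd] at hc
      rcases Finset.mem_insert.1 hc with rfl | hc
      · exact margin_pc ω A G d hω0 w hpj
      · obtain ⟨t, ht, rfl⟩ := Finset.mem_image.1 hc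
        exact hfresh t ht
    have hmaxeq : maxMarginSet ω (Vg A G d) (Ctot G) w = Ctot G \ w := by
      unfold maxMarginSet
      apply Finset.filter_true_of_mem
      intro c hc c' hc'
      exact le_of_eq (by rw [hall c' hc', hall c hc])
    obtain ⟨s₀, hs₀⟩ : (G \ W).Nonempty := by
      rw [← Finset.card_pos, Finset.card_sdiff_of_subset hWG, hWcard]
      omega
    obtain ⟨c, hc⟩ := seqNext_nonempty ω pri (Vg A G d) (Ctot G) w ⟨pc, hpcmem⟩
    have hcmax : c ∈ maxMarginSet ω (Vg A G d) (Ctot G) w := (Finset.filter_subset _ _) hc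
    have hcne : c ≠ pc := by
      intro he
      have hs₀max : cH s₀ ∈ maxMarginSet ω (Vg A G d) (Ctot G) w := by
        rw [hmaxeq, hsd]
        exact Finset.mem_insert_of_mem (Finset.mem_image_of_mem _ hs₀)
      have h1 : pri c ≤ pri (cH s₀) := (Finset.mem_filter.1 hc).2 (cH s₀) hs₀max
      have h2 : pri (cH s₀) < pri pc := hpri s₀ (Finset.mem_sdiff.1 hs₀).1
      rw [he] at h1
      omega
    obtain ⟨s, hsGW, rfl⟩ : ∃ s ∈ G \ W, cH s = c := by
      have hx := hcmax
      rw [hmaxeq, hsd] at hx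
      rcases Finset.mem_insert.1 hx with h | h
      · exact absurd h hcne
      · obtain ⟨s, hs, rfl⟩ := Finset.mem_image.1 h; exact ⟨s, hs, rfl⟩
    have hnext : seqNext ω pri (Vg A G d) (Ctot G) w = {cH s} :=
      seqNext_eq_of_mem ω pri (Vg A G d) (Ctot G) w hinj hc
    obtain ⟨hsG, hsW⟩ := Finset.mem_sdiff.1 hsGW
    refine ⟨insert s W, Finset.insert_subset hsG hWG, ?_, ?_, ?_⟩
    · rw [Finset.image_insert, hWim, seqC_succ, ← hw, hnext, Finset.insert_eq, Finset.union_comm]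
    · rw [Finset.card_insert_of_notMem hsW, hWcard]
    · rw [seqC_succ, ← hw, hnext]
      simp only [Finset.mem_union, Finset.mem_singleton]
      rintro (h | h)
      · exact hpj h
      · exact pc_ne_cH s h

/-- correctness of the reduction from Regular Set Packing to destructive
control by deleting candidates for sequential ω-Thiele rules with `ω(2) < 2ω(1)`. -/
theorem dcdc_seq_thiele (ω : ℕ → ℝ) (hω0 : ω 0 = 0) (hmono : ∀ i, ω i ≤ ω (i + 1))
    (hω : ω 2 < 2 * ω 1)
    (A : Finset β) (H : Finset (Finset β)) (d : ℕ) (hd : 1 ≤ d)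
    (hH : ∀ s ∈ H, s ⊆ A ∧ s.card = d)
    (κ : ℕ) (hκ1 : 1 ≤ κ) (hκ2 : κ ≤ H.card)
    (pri : Cand β → ℕ) (hinj : Set.InjOn pri (Ctot H : Set (Cand β)))
    (hpri : ∀ s ∈ H, pri (cH s : Cand β) < pri pc) :
    (∃ H' ⊆ H, H'.card = κ ∧ ∀ s ∈ H', ∀ t ∈ H', s ≠ t → Disjoint s t) ↔
      (∃ C' ⊆ Ctot H \ {pc}, C'.card ≤ H.card - κ ∧
        pc ∉ seqCommittee ω pri ((votes A H d).map (· ∩ (Ctot H \ C')))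
              (Ctot H \ C') κ) := by
  constructor
  · rintro ⟨H', hH'H, hH'card, hH'disj⟩
    set C' : Finset (Cand β) := (H \ H').image cH with hC'
    have hsub : C' ⊆ H.image cH := Finset.image_subset_image Finset.sdiff_subset
    have hG : (H.filter fun s => cH s ∉ C') = H' := by
      ext s
      simp only [Finset.mem_filter, hC', cH_mem_image, Finset.mem_sdiff]
      constructor
      · rintro ⟨hsH, hns⟩
        by_contra h
        exact hns ⟨hsH, h⟩
      · intro h
        exact ⟨hH'H h, fun hh => hh.2 h⟩
    refine ⟨C', ?_, ?_, ?_⟩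
    · intro x hx
      obtain ⟨s, hs, rfl⟩ := Finset.mem_image.1 hx
      refine Finset.mem_sdiff.2 ⟨?_, ?_⟩
      · exact Finset.mem_insert_of_mem (Finset.mem_image_of_mem _ (Finset.mem_sdiff.1 hs).1)
      · simp only [Finset.mem_singleton]
        exact fun h => pc_ne_cH s h.symm
    · calc C'.card ≤ (H \ H').card := Finset.card_image_le
        _ = H.card - κ := by rw [Finset.card_sdiff_of_subset hH'H, hH'card]
    · rw [restrict_votes A H d C' hsub, restrict_cands H C' hsub, hG]
      obtain ⟨W, _, _, _, hpc⟩ := forward_invariant ω hω0 A H H' d hH hH'H hH'disj pri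
        (hinj.mono (Finset.coe_subset.2 (Ctot_mono hH'H)))
        (fun s hs => hpri s (hH'H hs)) κ (le_of_eq hH'card.symm)
      exact hpc
  · rintro ⟨C', hC'sub, hC'card, hpc⟩
    have hsub : C' ⊆ H.image cH := by
      intro x hx
      have hx' := Finset.mem_sdiff.1 (hC'sub hx)
      rcases Finset.mem_insert.1 hx'.1 with h | h
      · exact absurd (Finset.mem_singleton.2 h) hx'.2
      · exact h
    set G : Finset (Finset β) := H.filter fun s => cH s ∉ C' with hGdef
    rw [restrict_votes A H d C' hsub, restrict_cands H C' hsub, ← hGdef] at hpc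
    have hBcard : (H.filter fun s => cH s ∈ C').card ≤ C'.card := by
      apply Finset.card_le_card_of_injOn cH
      · intro s hs
        exact (Finset.mem_filter.1 hs).2
      · exact fun a _ b _ h => cH_injective h
    have hsplit : G.card + (H.filter fun s => cH s ∈ C').card = H.card := by
      rw [hGdef]
      rw [Finset.filter_not]
      rw [Finset.card_sdiff_of_subset (Finset.filter_subset _ _)]
      have := Finset.card_le_card (Finset.filter_subset (fun s => cH s ∈ C') H)
      omega
    have hGcard : κ ≤ G.card := by omega
    obtain ⟨W, hWG, _, hWcard, hWdisj⟩ := backward_invariant ω hω0 hω A H G d hH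
      (Finset.filter_subset _ _) pri
      (hinj.mono (Finset.coe_subset.2 (Ctot_mono (Finset.filter_subset _ _)))) κ hpc
    exact ⟨W, hWG.trans (Finset.filter_subset _ _), hWcard, hWdisj⟩

end Stmt19
end
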